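/- Let F_{2n} be the free group on z_0, …, z_{2n−1} (n ≥ 1) and ψ the automorphism with ψ(z_0) = z_0 z_2 ⋯ z_{2n−2} z_{2n−1}⁻¹ z_{2n−3}⁻¹ ⋯ z_3⁻¹ z_1⁻¹ and ψ(z_i) = z_{i−1} for 1 ≤ i ≤ 2n−1. Then the element Σ = z_0 z_2 ⋯ z_{2n−2} (z_0 z_1 ⋯ z_{2n−1})⁻¹ z_1 z_3 ⋯ z_{2n−1} satisfies ψ(Σ) = Σ. -/

import Mathlib

/-- The product of even-indexed generators `z_0 z_2 ⋯ z_{2n-2}`. -/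
def evenProd (n : ℕ) : FreeGroup (Fin (2 * n)) :=
  ((List.finRange n).map (fun j => FreeGroup.of ⟨2 * (j : ℕ), by have := j.isLt; omega⟩)).prod

/-- The product of odd-indexed generators `z_1 z_3 ⋯ z_{2n-1}`. -/
def oddProd (n : ℕ) : FreeGroup (Fin (2 * n)) :=
  ((List.finRange n).map
    (fun j => FreeGroup.of ⟨2 * (j : ℕ) + 1, by have := j.isLt; omega⟩)).prod

/-- The full product `z_0 z_1 ⋯ z_{2n-1}`. -/
def allProd (n : ℕ) : FreeGroup (Fin (2 * n)) :=
  ((List.finRange (2 * n)).map FreeGroup.of).prod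

/-- `Σ = z_0 z_2 ⋯ z_{2n-2} (z_0 z_1 ⋯ z_{2n-1})⁻¹ z_1 z_3 ⋯ z_{2n-1}`. -/
def SigmaProd (n : ℕ) : FreeGroup (Fin (2 * n)) :=
  evenProd n * (allProd n)⁻¹ * oddProd n

private lemma finRange_map_eq_range_map {α : Type*} {k : ℕ} (f : Fin k → α) (h : ℕ → α)
    (hf : ∀ j (hj : j < k), f ⟨j, hj⟩ = h j) :
    (List.finRange k).map f = (List.range k).map h := by
  apply List.ext_getElem (by simp)
  intro i h1 h2
  simp only [List.getElem_map, List.getElem_finRange, List.getElem_range]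
  rw [← hf i (by simpa using h2)]
  rfl

/-- total generator function -/
private def g (n : ℕ) (hn : 1 ≤ n) (i : ℕ) : FreeGroup (Fin (2 * n)) :=
  FreeGroup.of ⟨i % (2 * n), Nat.mod_lt _ (Nat.mul_pos Nat.two_pos hn)⟩

private lemma g_eq (n : ℕ) (hn : 1 ≤ n) (i : ℕ) (h : i < 2 * n) :
    g n hn i = FreeGroup.of ⟨i, h⟩ := by
  unfold g; congr 1; ext; simp [Nat.mod_eq_of_lt h]

private lemma evenProd_eq (n : ℕ) (hn : 1 ≤ n) :
    evenProd n = ((List.range n).map (fun j => g n hn (2 * j))).prod := by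
  unfold evenProd
  congr 1
  apply finRange_map_eq_range_map
  intro j hj
  rw [g_eq n hn _ (by omega)]

private lemma oddProd_eq (n : ℕ) (hn : 1 ≤ n) :
    oddProd n = ((List.range n).map (fun j => g n hn (2 * j + 1))).prod := by
  unfold oddProd
  congr 1
  apply finRange_map_eq_range_map
  intro j hj
  rw [g_eq n hn _ (by omega)]

private lemma allProd_eq (n : ℕ) (hn : 1 ≤ n) :
    allProd n = ((List.range (2 * n)).map (g n hn)).prod := by
  unfold allProd
  congr 1
  apply finRange_map_eq_range_map
  intro j hj
  rw [g_eq n hn _ (by omega)]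

theorem stmt_18 (n : ℕ) (hn : 1 ≤ n)
    (ψ : FreeGroup (Fin (2 * n)) →* FreeGroup (Fin (2 * n)))
    (h0 : ψ (FreeGroup.of ⟨0, by omega⟩) = evenProd n * (oddProd n)⁻¹)
    (hi : ∀ i : Fin (2 * n), 0 < (i : ℕ) →
      ψ (FreeGroup.of i) =
        FreeGroup.of ⟨(i : ℕ) - 1, lt_of_le_of_lt (Nat.sub_le _ _) i.isLt⟩) :
    ψ (SigmaProd n) = SigmaProd n := by
  set G := g n hn with hG
  have hψg : ∀ i : ℕ, i + 1 < 2 * n → ψ (G (i + 1)) = G i := by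
    intro i h
    rw [hG, g_eq n hn _ h, g_eq n hn _ (by omega), hi _ (by simp)]
    congr 1
  have hψ0 : ψ (G 0) = evenProd n * (oddProd n)⁻¹ := by
    rw [hG, g_eq n hn _ (by omega)]; exact h0
  set Oinit := ((List.range (n - 1)).map (fun j => G (2 * j + 1))).prod with hOinit
  set Ainit := ((List.range (2 * n - 1)).map G).prod with hAinit
  set L := G (2 * n - 1) with hL
  have hr1 : List.range n = List.range (n - 1) ++ [n - 1] := by
    conv_lhs => rw [show n = (n - 1) + 1 by omega, List.range_succ]
  have hr2 : List.range (2 * n) = List.range (2 * n - 1) ++ [2 * n - 1] := by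
    conv_lhs => rw [show 2 * n = (2 * n - 1) + 1 by omega, List.range_succ]
  have hr3 : List.range n = 0 :: (List.range (n - 1)).map (· + 1) := by
    conv_lhs => rw [show n = (n - 1) + 1 by omega, List.range_succ_eq_map]
  have hr4 : List.range (2 * n) = 0 :: (List.range (2 * n - 1)).map (· + 1) := by
    conv_lhs => rw [show 2 * n = (2 * n - 1) + 1 by omega, List.range_succ_eq_map]
  have hOsplit : oddProd n = Oinit * L := by
    rw [oddProd_eq n hn, hr1, List.map_append, List.prod_append]
    simp only [List.map_cons, List.map_nil, List.prod_cons, List.prod_nil, mul_one]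
    rw [hOinit, hL]
    congr 2
    omega
  have hAsplit : allProd n = Ainit * L := by
    rw [allProd_eq n hn, hr2, List.map_append, List.prod_append]
    simp only [List.map_cons, List.map_nil, List.prod_cons, List.prod_nil, mul_one]
    rfl
  have hψO : ψ (oddProd n) = evenProd n := by
    rw [oddProd_eq n hn, evenProd_eq n hn, map_list_prod, List.map_map]
    congr 1
    apply List.map_congr_left
    intro j hj
    have : j < n := List.mem_range.mp hj
    exact hψg (2 * j) (by omega)
  have hψE : ψ (evenProd n) = ψ (G 0) * Oinit := by
    rw [evenProd_eq n hn, hr3, List.map_cons,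
      List.prod_cons, map_mul, List.map_map, map_list_prod, List.map_map, hOinit]
    congr 1
    congr 1
    apply List.map_congr_left
    intro j hj
    have hj' : j < n - 1 := List.mem_range.mp hj
    simp only [Function.comp_apply]
    rw [show 2 * (j + 1) = (2 * j + 1) + 1 by ring]
    exact hψg _ (by omega)
  have hψA : ψ (allProd n) = ψ (G 0) * Ainit := by
    rw [allProd_eq n hn, hr4,
      List.map_cons, List.prod_cons, map_mul, List.map_map, map_list_prod, List.map_map, hAinit]
    congr 1
    congr 1
    apply List.map_congr_left
    intro j hj
    have hj' : j < 2 * n - 1 := List.mem_range.mp hj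
    simp only [Function.comp_apply]
    exact hψg j (by omega)
  unfold SigmaProd
  rw [map_mul, map_mul, map_inv, hψE, hψA, hψO, hψ0]
  rw [show Oinit = oddProd n * L⁻¹ by rw [hOsplit]; group,
      show Ainit = allProd n * L⁻¹ by rw [hAsplit]; group]
  group
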